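/- arXiv:2605.03990 — 2 statements merged into one kernel-verified Lean document; each statement's English description precedes it below -/
import Mathlib

section
/- Let S_1,…,S_m be injective contracting maps of ℝⁿ with attractor K (the unique nonempty compact set with K = ⋃_{i=1}^m S_i(K)), and suppose that for any pair i ≠ j the intersection S_i(K) ∩ S_j(K) is empty or a single point (the single-point intersection property). Let C be the set of all these intersection points, and define the bipartite intersection graph Ĝ on the vertex set {1,…,m} ⊔ C with an edge between i and A ∈ C exactly when A ∈ S_i(K). If Ĝ is a tree (connected and acyclic), then K is a dendrite, i.e., a compact, connected, locally connected metric space containing no subset homeomorphic to the circle. -/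
open Set Metric

noncomputable section

namespace DendriteAux

local notation "E2" => EuclideanSpace ℝ (Fin 2)

theorem chains_preconnected {X : Type*} [MetricSpace X] {K : Set X} (hK : IsCompact K)
    (hch : ∀ ε : ℝ, 0 < ε → ∀ x ∈ K, ∀ y ∈ K,
      Relation.ReflTransGen (fun a b => b ∈ K ∧ dist a b ≤ ε) x y) :
    IsPreconnected K := by
  rw [isPreconnected_closed_iff]
  rintro t t' ht ht' hcov ⟨a, haK, hat⟩ ⟨b, hbK, hbt'⟩
  by_contra hempty
  rw [Set.not_nonempty_iff_eq_empty] at hempty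
  have hdisj : ∀ p ∈ K ∩ t, p ∉ K ∩ t' := by
    intro p hp hpB
    have : p ∈ K ∩ (t ∩ t') := ⟨hp.1, hp.2, hpB.2⟩
    simp [hempty] at this
  have hAcomp : IsCompact (K ∩ t) := hK.inter_right ht
  have hBcomp : IsCompact (K ∩ t') := hK.inter_right ht'
  have hBne : (K ∩ t').Nonempty := ⟨b, hbK, hbt'⟩
  obtain ⟨a0, ha0, hmin⟩ := hAcomp.exists_isMinOn ⟨a, haK, hat⟩
    (continuous_infDist_pt (K ∩ t')).continuousOn
  have hd0 : 0 < infDist a0 (K ∩ t') :=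
    (hBcomp.isClosed.notMem_iff_infDist_pos hBne).mp (hdisj a0 ha0)
  set d := infDist a0 (K ∩ t') with hdd
  have hlb : ∀ p ∈ K ∩ t, ∀ q ∈ K ∩ t', d ≤ dist p q := fun p hp q hq =>
    le_trans (hmin hp) (infDist_le_dist_of_mem hq)
  have hchain := hch (d/2) (by linarith) a haK b hbK
  have hstay : ∀ y, Relation.ReflTransGen (fun a b => b ∈ K ∧ dist a b ≤ d/2) a y →
      y ∈ K ∩ t := by
    intro y hy
    induction hy with
    | refl => exact ⟨haK, hat⟩
    | tail h₁ h₂ ih =>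
      rcases h₂ with ⟨hcK, hdist⟩
      rcases hcov hcK with hct | hct'
      · exact ⟨hcK, hct⟩
      · exact absurd (hlb _ ih _ ⟨hcK, hct'⟩) (by push_neg; linarith)
  exact hdisj b (hstay b hchain) ⟨hbK, hbt'⟩

theorem rank2 : 1 < Module.rank ℝ E2 := by
  have h : Module.finrank ℝ E2 = 2 := finrank_euclideanSpace_fin
  have := Module.finrank_eq_rank ℝ E2
  rw [h] at this
  rw [← this]
  norm_num

instance factE2 : Fact (Module.finrank ℝ E2 = 1 + 1) := ⟨by simp [finrank_euclideanSpace_fin]⟩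

theorem sphere2_punct_connected (p : E2) :
    IsConnected (Metric.sphere (0 : E2) 1 \ {p}) := by
  by_cases hp : p ∈ Metric.sphere (0 : E2) 1
  · set v : Metric.sphere (0 : E2) 1 := ⟨p, hp⟩ with hv
    set e := stereographic' 1 v with he
    have hsrc : e.source = {v}ᶜ := stereographic'_source v
    have htgt : e.target = Set.univ := stereographic'_target v
    have hconn_t : IsConnected e.target := by
      rw [htgt]
      exact ⟨⟨0, trivial⟩, isPreconnected_univ⟩
    have hcs : ConnectedSpace ↥e.target := isConnected_iff_connectedSpace.mp hconn_t
    set h := e.toHomeomorphSourceTarget with hh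
    set g : ↥e.target → E2 := fun y => ((h.symm y : ↥e.source) : Metric.sphere (0 : E2) 1) with hg
    have hgc : Continuous g :=
      continuous_subtype_val.comp (continuous_subtype_val.comp h.symm.continuous)
    have himg : g '' Set.univ = Metric.sphere (0 : E2) 1 \ {p} := by
      ext x
      constructor
      · rintro ⟨y, -, rfl⟩
        refine ⟨((h.symm y : ↥e.source) : Metric.sphere (0 : E2) 1).2, ?_⟩
        intro hx
        have hmem : ((h.symm y : ↥e.source) : Metric.sphere (0 : E2) 1) ∈ e.source :=
          (h.symm y).2
        have hmem' := hsrc.subset hmem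
        simp only [Set.mem_compl_iff, Set.mem_singleton_iff] at hmem'
        simp only [Set.mem_singleton_iff] at hx
        exact hmem' (Subtype.ext hx)
      · rintro ⟨hx, hxp⟩
        have hmem : (⟨x, hx⟩ : Metric.sphere (0 : E2) 1) ∈ e.source := by
          apply hsrc.symm.subset
          simp only [Set.mem_compl_iff, Set.mem_singleton_iff]
          intro hxe
          exact hxp (by simpa [hv] using congrArg Subtype.val hxe)
        refine ⟨h ⟨⟨x, hx⟩, hmem⟩, trivial, ?_⟩
        simp only [hg, Homeomorph.symm_apply_apply]
    haveI := hcs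
    have : IsConnected (g '' Set.univ) :=
      isConnected_univ.image g hgc.continuousOn
    rwa [himg] at this
  · rw [Set.diff_singleton_eq_self hp]
    exact isConnected_sphere rank2 0 zero_le_one

theorem sphere2_infinite : Infinite ↥(Metric.sphere (0 : E2) 1) := by
  have hp : EuclideanSpace.single (0 : Fin 2) (1:ℝ) ∈ Metric.sphere (0 : E2) 1 := by
    simp [EuclideanSpace.norm_single]
  set v : Metric.sphere (0 : E2) 1 := ⟨_, hp⟩
  set e := stereographic' 1 v
  have : Infinite (EuclideanSpace ℝ (Fin 1)) :=
    Infinite.of_injective (WithLp.equiv 2 (Fin 1 → ℝ)).symm (Equiv.injective _)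
  have h2 : Infinite ↥e.target := by
    rw [stereographic'_target]
    exact Set.infinite_coe_iff.mpr Set.infinite_univ
  have h3 : Infinite ↥e.source := Infinite.of_injective _ e.toHomeomorphSourceTarget.symm.injective
  exact Infinite.of_injective (fun x : ↥e.source => (x : Metric.sphere (0 : E2) 1))
    Subtype.val_injective


theorem piece_reach {n m : ℕ}
    (S : Fin m → EuclideanSpace ℝ (Fin n) → EuclideanSpace ℝ (Fin n))
    (K : Set (EuclideanSpace ℝ (Fin n)))
    (C : Set (EuclideanSpace ℝ (Fin n)))
    (G : SimpleGraph (Fin m ⊕ ↥C))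
    (hG : ∀ u v, G.Adj u v ↔
      (∃ (i : Fin m) (A : ↥C), u = Sum.inl i ∧ v = Sum.inr A ∧ (A : EuclideanSpace ℝ (Fin n)) ∈ S i '' K) ∨
      (∃ (i : Fin m) (A : ↥C), u = Sum.inr A ∧ v = Sum.inl i ∧ (A : EuclideanSpace ℝ (Fin n)) ∈ S i '' K))
    (hconn : G.Connected) (i j : Fin m) :
    Relation.ReflTransGen (fun a b : Fin m => ((S a '' K) ∩ (S b '' K)).Nonempty) i j := by
  have hreach := hconn.preconnected (Sum.inl i) (Sum.inl j)
  rw [SimpleGraph.reachable_iff_reflTransGen] at hreach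
  let att : (Fin m ⊕ ↥C) → Set (Fin m) :=
    Sum.elim (fun a => {a}) (fun A => {a | (A : EuclideanSpace ℝ (Fin n)) ∈ S a '' K})
  have main : ∀ u v : Fin m ⊕ ↥C, Relation.ReflTransGen G.Adj u v →
      ∀ a ∈ att u, ∃ b ∈ att v,
        Relation.ReflTransGen (fun a b : Fin m => ((S a '' K) ∩ (S b '' K)).Nonempty) a b := by
    intro u v h
    induction h with
    | refl => exact fun a ha => ⟨a, ha, Relation.ReflTransGen.refl⟩
    | tail h₁ h₂ ih =>
      intro a ha
      obtain ⟨b, hb, hab⟩ := ih a ha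
      rcases (hG _ _).mp h₂ with ⟨l, A, hu, hv, hA⟩ | ⟨l, A, hu, hv, hA⟩
      · subst hu; subst hv
        have hbl : b = l := hb
        subst hbl
        exact ⟨b, hA, hab⟩
      · subst hu; subst hv
        exact ⟨l, rfl, hab.tail ⟨(A : EuclideanSpace ℝ (Fin n)), hb, hA⟩⟩
  obtain ⟨b, hb, hres⟩ := main _ _ hreach i rfl
  have : b = j := hb
  subst this
  exact hres

theorem chains_exist {n m : ℕ}
    (S : Fin m → EuclideanSpace ℝ (Fin n) → EuclideanSpace ℝ (Fin n))
    (r : Fin m → NNReal)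
    (hLip : ∀ i, LipschitzWith (r i) (S i))
    (K : Set (EuclideanSpace ℝ (Fin n)))
    (hKcomp : IsCompact K) (hK : K = ⋃ i, S i '' K)
    (c : NNReal) (hc1 : (c : ℝ) < 1) (hci : ∀ i, (r i : ℝ) ≤ c)
    (hpr : ∀ i j : Fin m,
      Relation.ReflTransGen (fun a b => ((S a '' K) ∩ (S b '' K)).Nonempty) i j) :
    ∀ ε : ℝ, 0 < ε → ∀ x ∈ K, ∀ y ∈ K,
      Relation.ReflTransGen (fun a b => b ∈ K ∧ dist a b ≤ ε) x y := by
  have hsub : ∀ i, S i '' K ⊆ K := fun i =>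
    le_of_le_of_eq (Set.subset_iUnion (fun i => S i '' K) i) hK.symm
  set Ch : ℝ → Prop := fun ε => ∀ x ∈ K, ∀ y ∈ K,
    Relation.ReflTransGen (fun a b => b ∈ K ∧ dist a b ≤ ε) x y with hCh
  have hmono : ∀ ε ε' : ℝ, ε ≤ ε' → Ch ε → Ch ε' := by
    intro ε ε' hle h x hx y hy
    exact Relation.ReflTransGen.mono (fun a b hb => ⟨hb.1, hb.2.trans hle⟩) x y (h x hx y hy)
  have hmap : ∀ (ε : ℝ) (i : Fin m) (x y : EuclideanSpace ℝ (Fin n)),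
      Relation.ReflTransGen (fun a b => b ∈ K ∧ dist a b ≤ ε) x y →
      Relation.ReflTransGen (fun a b => b ∈ K ∧ dist a b ≤ (c:ℝ) * ε) (S i x) (S i y) := by
    intro ε i x y h
    refine Relation.ReflTransGen.lift (S i) ?_ x y h
    rintro a b ⟨hbK, hd⟩
    refine ⟨hsub i ⟨b, hbK, rfl⟩, ?_⟩
    calc dist (S i a) (S i b) ≤ (r i : ℝ) * dist a b := (hLip i).dist_le_mul a b
      _ ≤ (c:ℝ) * ε := mul_le_mul (hci i) hd dist_nonneg c.coe_nonneg
  have hstep : ∀ ε : ℝ, Ch ε → Ch ((c:ℝ) * ε) := by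
    intro ε hC x hx y hy
    rw [hK] at hx hy
    obtain ⟨i, xi⟩ := Set.mem_iUnion.mp hx
    obtain ⟨j, yj⟩ := Set.mem_iUnion.mp hy
    have hpiece : ∀ (l : Fin m), ∀ p ∈ S l '' K, ∀ q ∈ S l '' K,
        Relation.ReflTransGen (fun a b => b ∈ K ∧ dist a b ≤ (c:ℝ) * ε) p q := by
      rintro l p ⟨a, haK, rfl⟩ q ⟨b, hbK, rfl⟩
      exact hmap ε l a b (hC a haK b hbK)
    have main : ∀ j', Relation.ReflTransGen
        (fun a b => ((S a '' K) ∩ (S b '' K)).Nonempty) i j' →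
        ∀ q ∈ S j' '' K,
        Relation.ReflTransGen (fun a b => b ∈ K ∧ dist a b ≤ (c:ℝ) * ε) x q := by
      intro j' h
      induction h with
      | refl => exact fun q hq => hpiece i x xi q hq
      | tail h₁ h₂ ih =>
        intro q hq
        obtain ⟨B, hB1, hB2⟩ := h₂
        exact (ih B hB1).trans (hpiece _ B hB2 q hq)
    exact main j (hpr i j) y yj
  have hbase : Ch (diam K + 1) := fun x hx y hy =>
    Relation.ReflTransGen.single
      ⟨hy, le_trans (dist_le_diam_of_mem hKcomp.isBounded hx hy) (by linarith)⟩
  have hD : (0:ℝ) < diam K + 1 := by linarith [diam_nonneg (s := K)]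
  have hkk : ∀ k : ℕ, Ch ((c:ℝ)^k * (diam K + 1)) := by
    intro k; induction k with
    | zero => simpa using hbase
    | succ k ih =>
      have h2 : (c:ℝ)^(k+1) * (diam K + 1) = (c:ℝ) * ((c:ℝ)^k * (diam K + 1)) := by ring
      rw [h2]; exact hstep _ ih
  intro ε hε x hx y hy
  obtain ⟨k, hk⟩ := exists_pow_lt_of_lt_one (div_pos hε hD) hc1
  have : (c:ℝ)^k * (diam K + 1) ≤ ε := by
    rw [← div_mul_cancel₀ ε (ne_of_gt hD)]
    exact mul_le_mul hk.le le_rfl (by linarith) (le_of_lt (div_pos hε hD))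
  exact hmono _ _ this (hkk k) x hx y hy

theorem loc_conn {n m : ℕ}
    (S : Fin m → EuclideanSpace ℝ (Fin n) → EuclideanSpace ℝ (Fin n))
    (r : Fin m → NNReal)
    (hLip : ∀ i, LipschitzWith (r i) (S i))
    (K : Set (EuclideanSpace ℝ (Fin n)))
    (hKcomp : IsCompact K) (hK : K = ⋃ i, S i '' K)
    (hKconn : IsPreconnected K)
    (c : NNReal) (hc1 : (c : ℝ) < 1) (hci : ∀ i, (r i : ℝ) ≤ c) :
    LocallyConnectedSpace ↥K := by
  have hsub : ∀ i, S i '' K ⊆ K := fun i =>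
    le_of_le_of_eq (Set.subset_iUnion (fun i => S i '' K) i) hK.symm
  let Q : ℕ → Set (Set (EuclideanSpace ℝ (Fin n))) := fun k =>
    Nat.rec ({K} : Set (Set (EuclideanSpace ℝ (Fin n))))
      (fun _ Qk => ⋃ i : Fin m, (Set.image (S i)) '' Qk) k
  have hQsucc : ∀ k, Q (k+1) = ⋃ i : Fin m, (Set.image (S i)) '' Q k := fun k => rfl
  have hQfin : ∀ k, (Q k).Finite := by
    intro k; induction k with
    | zero => exact Set.finite_singleton K
    | succ k ih =>
      rw [hQsucc]
      exact Set.finite_iUnion (fun i => ih.image _)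
  have hQprops : ∀ k, ∀ T ∈ Q k, T ⊆ K ∧ IsCompact T ∧ IsPreconnected T ∧
      diam T ≤ (c:ℝ)^k * diam K := by
    intro k; induction k with
    | zero =>
      intro T hT
      obtain rfl : T = K := hT
      exact ⟨subset_rfl, hKcomp, hKconn, by simp⟩
    | succ k ih =>
      intro T hT
      rw [hQsucc] at hT
      obtain ⟨i, hTi⟩ := Set.mem_iUnion.mp hT
      obtain ⟨T', hT', rfl⟩ := hTi
      obtain ⟨hsubK, hcomp, hconn, hdiam⟩ := ih T' hT'
      refine ⟨(Set.image_mono hsubK).trans (hsub i), hcomp.image (hLip i).continuous,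
        hconn.image _ (hLip i).continuous.continuousOn, ?_⟩
      calc diam (S i '' T') ≤ (r i : ℝ) * diam T' := (hLip i).diam_image_le T' hcomp.isBounded
        _ ≤ (c:ℝ) * ((c:ℝ)^k * diam K) :=
          mul_le_mul (hci i) hdiam diam_nonneg c.coe_nonneg
        _ = (c:ℝ)^(k+1) * diam K := by ring
  have hQcover : ∀ k, K ⊆ ⋃₀ Q k := by
    intro k; induction k with
    | zero => exact fun x hx => ⟨K, rfl, hx⟩
    | succ k ih =>
      intro x hx
      rw [hK] at hx
      obtain ⟨i, hxi⟩ := Set.mem_iUnion.mp hx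
      obtain ⟨y, hyK, rfl⟩ := hxi
      obtain ⟨T, hT, hyT⟩ := ih hyK
      exact ⟨S i '' T, by rw [hQsucc]; exact Set.mem_iUnion.mpr ⟨i, ⟨T, hT, rfl⟩⟩,
        ⟨y, hyT, rfl⟩⟩
  rw [locallyConnectedSpace_iff_connected_subsets]
  intro x U hU
  obtain ⟨ε, hε, hball⟩ := Metric.mem_nhds_iff.mp hU
  have hD : (0:ℝ) < diam K + 1 := by linarith [diam_nonneg (s := K)]
  obtain ⟨k, hk⟩ := exists_pow_lt_of_lt_one (div_pos hε hD) hc1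
  have hdk : ∀ T ∈ Q k, diam T < ε := by
    intro T hT
    have h1 := (hQprops k T hT).2.2.2
    have h2 : (c:ℝ)^k * diam K < ε := by
      rw [← div_mul_cancel₀ ε (ne_of_gt hD)]
      have hc0 : (0:ℝ) ≤ (c:ℝ)^k := pow_nonneg c.coe_nonneg k
      calc (c:ℝ)^k * diam K ≤ (c:ℝ)^k * (diam K + 1) := by
            apply mul_le_mul_of_nonneg_left (by linarith) hc0
        _ < ε / (diam K + 1) * (diam K + 1) := by
            apply mul_lt_mul_of_pos_right hk hD
      -- goal: ... ≤ closing
    exact lt_of_le_of_lt h1 h2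
  set M := {T ∈ Q k | (x : EuclideanSpace ℝ (Fin n)) ∈ T} with hM
  set V := (Subtype.val : ↥K → EuclideanSpace ℝ (Fin n)) ⁻¹' ⋃₀ M with hV
  have hMsubK : ⋃₀ M ⊆ K := by
    rintro y ⟨T, hT, hyT⟩
    exact (hQprops k T hT.1).1 hyT
  refine ⟨V, ?_, ?_, ?_⟩
  · -- V ∈ 𝓝 x
    set W := ⋃₀ {T ∈ Q k | (x : EuclideanSpace ℝ (Fin n)) ∉ T} with hW
    have hWclosed : IsClosed W := by
      rw [hW, Set.sUnion_eq_biUnion]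
      exact Set.Finite.isClosed_biUnion ((hQfin k).subset (Set.sep_subset _ _))
        (fun T hT => (hQprops k T hT.1).2.1.isClosed)
    have hxW : (x : EuclideanSpace ℝ (Fin n)) ∉ W := by
      rintro ⟨T, hT, hxT⟩
      exact hT.2 hxT
    have hopen : IsOpen ((Subtype.val : ↥K → EuclideanSpace ℝ (Fin n)) ⁻¹' Wᶜ) :=
      hWclosed.isOpen_compl.preimage continuous_subtype_val
    refine Filter.mem_of_superset (hopen.mem_nhds hxW) ?_
    intro y hy
    obtain ⟨T, hT, hyT⟩ := hQcover k y.2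
    have hxT : (x : EuclideanSpace ℝ (Fin n)) ∈ T := by
      by_contra hxT
      exact hy ⟨T, ⟨hT, hxT⟩, hyT⟩
    exact ⟨T, ⟨hT, hxT⟩, hyT⟩
  · -- preconnected
    have himg : (Subtype.val : ↥K → EuclideanSpace ℝ (Fin n)) '' V = ⋃₀ M := by
      rw [hV, Subtype.image_preimage_coe, Set.inter_eq_right.mpr hMsubK]
    have hpre : IsPreconnected (⋃₀ M) :=
      isPreconnected_sUnion (x : EuclideanSpace ℝ (Fin n)) M (fun T hT => hT.2)
        (fun T hT => (hQprops k T hT.1).2.2.1)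
    rw [← himg] at hpre
    exact Topology.IsInducing.subtypeVal.isPreconnected_image.mp hpre
  · -- V ⊆ U
    intro y hy
    obtain ⟨T, hT, hyT⟩ := hy
    apply hball
    rw [Metric.mem_ball, Subtype.dist_eq]
    calc dist (y : EuclideanSpace ℝ (Fin n)) (x : EuclideanSpace ℝ (Fin n))
        ≤ diam T := dist_le_diam_of_mem (hQprops k T hT.1).2.1.isBounded hyT hT.2
      _ < ε := hdk T hT.1

theorem circle_in_piece {n m : ℕ}
    (S : Fin m → EuclideanSpace ℝ (Fin n) → EuclideanSpace ℝ (Fin n))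
    (r : Fin m → NNReal)
    (hLip : ∀ i, LipschitzWith (r i) (S i))
    (K : Set (EuclideanSpace ℝ (Fin n)))
    (hKcomp : IsCompact K)
    (hK : K = ⋃ i, (S i) '' K)
    (hSIP : ∀ i j, i ≠ j → ((S i '' K) ∩ (S j '' K)).Subsingleton)
    (C : Set (EuclideanSpace ℝ (Fin n)))
    (hC : C = {x | ∃ i j, i ≠ j ∧ x ∈ (S i '' K) ∩ (S j '' K)})
    (G : SimpleGraph (Fin m ⊕ ↥C))
    (hG : ∀ u v, G.Adj u v ↔
      (∃ (i : Fin m) (A : ↥C), u = Sum.inl i ∧ v = Sum.inr A ∧ (A : EuclideanSpace ℝ (Fin n)) ∈ S i '' K) ∨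
      (∃ (i : Fin m) (A : ↥C), u = Sum.inr A ∧ v = Sum.inl i ∧ (A : EuclideanSpace ℝ (Fin n)) ∈ S i '' K))
    (hTree : G.IsTree)
    (J : Set (EuclideanSpace ℝ (Fin n))) (hJK : J ⊆ K)
    (hJinf : J.Infinite)
    (hJpc : ∀ p : EuclideanSpace ℝ (Fin n), IsPreconnected (J \ {p})) :
    ∃ i, J ⊆ S i '' K := by
  classical
  by_contra hno
  push_neg at hno
  have hCfin : C.Finite := by
    have hCsub : C ⊆ ⋃ i : Fin m, ⋃ j : Fin m,
        {x | i ≠ j ∧ x ∈ (S i '' K) ∩ (S j '' K)} := by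
      rw [hC]
      rintro x ⟨i, j, hij, hx⟩
      exact Set.mem_iUnion.mpr ⟨i, Set.mem_iUnion.mpr ⟨j, hij, hx⟩⟩
    refine Set.Finite.subset (Set.finite_iUnion fun i => Set.finite_iUnion fun j => ?_) hCsub
    by_cases hij : i = j
    · have : {x | i ≠ j ∧ x ∈ (S i '' K) ∩ (S j '' K)} = ∅ := by
        ext x; simp [hij]
      rw [this]; exact Set.finite_empty
    · exact Set.Finite.subset (hSIP i j hij).finite (fun x hx => hx.2)
  obtain ⟨x, hxJ, hxC⟩ := (hJinf.diff hCfin).nonempty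
  have hxK := hJK hxJ
  rw [hK] at hxK
  obtain ⟨i, hxi⟩ := Set.mem_iUnion.mp hxK
  obtain ⟨z, hzJ, hzi⟩ := Set.not_subset.mp (hno i)
  have hzK := hJK hzJ
  rw [hK] at hzK
  obtain ⟨j, hzj⟩ := Set.mem_iUnion.mp hzK
  have hij : i ≠ j := fun h => hzi (h ▸ hzj)
  obtain ⟨p, hp, huniq⟩ := hTree.existsUnique_path (Sum.inl i) (Sum.inl j)
  have hpn : ¬ p.Nil := SimpleGraph.Walk.not_nil_of_ne (by simp [hij])
  obtain ⟨v₁, hadj, q, rfl⟩ := SimpleGraph.Walk.not_nil_iff.mp hpn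
  rcases (hG _ _).mp hadj with ⟨l, A, hl, hv, hA⟩ | ⟨l, A, hl, hv, hA⟩
  swap
  · exact absurd hl (by simp)
  have hli : l = i := by
    have := hl.symm
    simpa using this
  subst hli
  subst hv
  -- hA : A.val ∈ S l '' K,  endpoints : walk from inl l to inl j
  have hkey : ∀ w : G.Walk (Sum.inl l) (Sum.inl j), Sum.inr A ∈ w.support := by
    intro w
    have hbp : w.bypass = SimpleGraph.Walk.cons hadj q :=
      huniq w.bypass (SimpleGraph.Walk.bypass_isPath w)
    have hmem : Sum.inr A ∈ w.bypass.support := by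
      rw [hbp, SimpleGraph.Walk.support_cons]
      exact List.mem_cons_of_mem _ (SimpleGraph.Walk.start_mem_support q)
    exact SimpleGraph.Walk.support_bypass_subset w hmem
  set R : Fin m → Prop := fun l' => ∃ w : G.Walk (Sum.inl l) (Sum.inl l'),
    Sum.inr A ∉ w.support with hR
  have hRi : R l := ⟨SimpleGraph.Walk.nil, by simp⟩
  have hRj : ¬ R j := by rintro ⟨w, hw⟩; exact hw (hkey w)
  have hext : ∀ l₁ l₂, R l₁ → ∀ B, B ∈ (S l₁ '' K) ∩ (S l₂ '' K) →
      B ≠ (A : EuclideanSpace ℝ (Fin n)) → R l₂ := by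
    intro l₁ l₂ hRl B hB hBA
    by_cases hll : l₁ = l₂
    · subst hll; exact hRl
    have hBC : B ∈ C := by rw [hC]; exact ⟨l₁, l₂, hll, hB⟩
    obtain ⟨w, hw⟩ := hRl
    have adj1 : G.Adj (Sum.inl l₁) (Sum.inr ⟨B, hBC⟩) :=
      (hG _ _).mpr (Or.inl ⟨l₁, ⟨B, hBC⟩, rfl, rfl, hB.1⟩)
    have adj2 : G.Adj (Sum.inr ⟨B, hBC⟩) (Sum.inl l₂) :=
      (hG _ _).mpr (Or.inr ⟨l₂, ⟨B, hBC⟩, rfl, rfl, hB.2⟩)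
    refine ⟨w.append (SimpleGraph.Walk.cons adj1 (SimpleGraph.Walk.cons adj2 SimpleGraph.Walk.nil)), ?_⟩
    intro hmem
    rw [SimpleGraph.Walk.support_append] at hmem
    rcases List.mem_append.mp hmem with h1 | h2
    · exact hw h1
    · simp only [SimpleGraph.Walk.support_cons, SimpleGraph.Walk.support_nil,
        List.tail_cons, List.mem_cons, List.mem_singleton] at h2
      rcases h2 with h2 | h2 | h2
      · apply hBA
        have h3 : A = (⟨B, hBC⟩ : ↥C) := Sum.inr_injective h2
        exact (congrArg Subtype.val h3).symm
      · exact absurd h2 (by simp)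
      · simp at h2
  set F1 := ⋃ l' : Fin m, ⋃ (_ : R l'), S l' '' K with hF1
  set F2 := ⋃ l' : Fin m, ⋃ (_ : ¬ R l'), S l' '' K with hF2
  have hF1closed : IsClosed F1 :=
    isClosed_iUnion_of_finite fun l' => isClosed_iUnion_of_finite fun _ =>
      (hKcomp.image (hLip l').continuous).isClosed
  have hF2closed : IsClosed F2 :=
    isClosed_iUnion_of_finite fun l' => isClosed_iUnion_of_finite fun _ =>
      (hKcomp.image (hLip l').continuous).isClosed
  have hmemF1 : ∀ y, y ∈ F1 ↔ ∃ l', R l' ∧ y ∈ S l' '' K := by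
    intro y; simp [hF1]
  have hmemF2 : ∀ y, y ∈ F2 ↔ ∃ l', ¬ R l' ∧ y ∈ S l' '' K := by
    intro y; simp [hF2]
  have hcover : ∀ y ∈ K, y ∈ F1 ∪ F2 := by
    intro y hy
    rw [hK] at hy
    obtain ⟨l2, hl2⟩ := Set.mem_iUnion.mp hy
    rcases Classical.em (R l2) with hRl2 | hRl2
    · exact Or.inl ((hmemF1 y).mpr ⟨l2, hRl2, hl2⟩)
    · exact Or.inr ((hmemF2 y).mpr ⟨l2, hRl2, hl2⟩)
  have hpc := hJpc (A : EuclideanSpace ℝ (Fin n))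
  have hne := hpc F2ᶜ F1ᶜ hF2closed.isOpen_compl hF1closed.isOpen_compl
    (by -- J \ {A} ⊆ F2ᶜ ∪ F1ᶜ
      rintro y ⟨hyJ, hyA⟩
      rw [Set.mem_singleton_iff] at hyA
      by_contra hy
      simp only [Set.mem_union, Set.mem_compl_iff, not_or, not_not] at hy
      obtain ⟨hyF2, hyF1⟩ := hy
      obtain ⟨l₁, hRl₁, hyl₁⟩ := (hmemF1 y).mp hyF1
      obtain ⟨l₂, hRl₂, hyl₂⟩ := (hmemF2 y).mp hyF2
      exact hRl₂ (hext l₁ l₂ hRl₁ y ⟨hyl₁, hyl₂⟩ hyA))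
    (by -- x side
      refine ⟨x, ⟨hxJ, ?_⟩, ?_⟩
      · rw [Set.mem_singleton_iff]
        intro hxA
        exact hxC (hxA ▸ A.2)
      · rw [Set.mem_compl_iff, hmemF2]
        rintro ⟨l2, hRl2, hxl2⟩
        by_cases hli : l2 = l
        · exact hRl2 (hli ▸ hRi)
        · exact hxC (hC ▸ (⟨l2, l, hli, hxl2, hxi⟩ :
            ∃ a b, a ≠ b ∧ x ∈ (S a '' K) ∩ (S b '' K))))
    (by -- z side
      refine ⟨z, ⟨hzJ, ?_⟩, ?_⟩
      · rw [Set.mem_singleton_iff]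
        intro hzA
        obtain ⟨a, haK, haA⟩ := hA
        exact hzi (hzA ▸ ⟨a, haK, haA⟩)
      · rw [Set.mem_compl_iff, hmemF1]
        rintro ⟨l2, hRl2, hzl2⟩
        apply hRj
        refine hext l2 j hRl2 z ⟨hzl2, hzj⟩ ?_
        intro hzA
        obtain ⟨a, haK, haA⟩ := hA
        exact hzi (hzA ▸ ⟨a, haK, haA⟩))
  obtain ⟨y, ⟨hyJ, _⟩, hyF2c, hyF1c⟩ := hne
  rcases hcover y (hJK hyJ) with h | h
  · exact hyF1c h
  · exact hyF2c h

theorem circle_facts {N : Type*} [MetricSpace N] (J : Set N)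
    (h : ↥J ≃ₜ ↥(Metric.sphere (0 : E2) 1)) :
    J.Infinite ∧ IsCompact J ∧ ∀ p : N, IsPreconnected (J \ {p}) := by
  haveI := sphere2_infinite
  have hJinf : J.Infinite := Set.infinite_coe_iff.mp (Infinite.of_injective h.symm h.symm.injective)
  haveI : CompactSpace ↥(Metric.sphere (0 : E2) 1) := Metric.sphere.compactSpace 0 1
  haveI : CompactSpace ↥J := h.symm.compactSpace
  have hJcomp : IsCompact J := isCompact_iff_compactSpace.mpr ‹_›
  refine ⟨hJinf, hJcomp, fun p => ?_⟩
  set g : ↥(Metric.sphere (0 : E2) 1) → N := fun y => (h.symm y : N) with hg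
  have hgc : Continuous g := continuous_subtype_val.comp h.symm.continuous
  by_cases hp : p ∈ J
  · set b := h ⟨p, hp⟩ with hb
    have hbs : IsPreconnected (Metric.sphere (0 : E2) 1 \ {(b : E2)}) :=
      (sphere2_punct_connected (b : E2)).isPreconnected
    have hval : (Subtype.val '' ({b}ᶜ : Set ↥(Metric.sphere (0 : E2) 1)))
        = Metric.sphere (0 : E2) 1 \ {(b : E2)} := by
      ext w
      constructor
      · rintro ⟨y, hy, rfl⟩
        exact ⟨y.2, fun hw => hy (Subtype.ext hw)⟩
      · rintro ⟨hw, hwb⟩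
        exact ⟨⟨w, hw⟩, fun hh => hwb (congrArg Subtype.val hh), rfl⟩
    have hpre : IsPreconnected ({b}ᶜ : Set ↥(Metric.sphere (0 : E2) 1)) := by
      apply Topology.IsInducing.subtypeVal.isPreconnected_image.mp
      rwa [hval]
    have himg : g '' ({b}ᶜ : Set ↥(Metric.sphere (0 : E2) 1)) = J \ {p} := by
      ext w
      constructor
      · rintro ⟨y, hy, rfl⟩
        refine ⟨(h.symm y).2, fun hw => hy ?_⟩
        have : h.symm y = (⟨p, hp⟩ : ↥J) := Subtype.ext hw
        rw [hb, ← this, Homeomorph.apply_symm_apply]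
        exact rfl
      · rintro ⟨hw, hwp⟩
        refine ⟨h ⟨w, hw⟩, fun hh => hwp ?_, by simp [hg]⟩
        have := congrArg h.symm hh
        rw [Homeomorph.symm_apply_apply, Homeomorph.symm_apply_apply] at this
        exact congrArg Subtype.val this
    rw [← himg]
    exact hpre.image g hgc.continuousOn
  · rw [Set.diff_singleton_eq_self hp]
    haveI : ConnectedSpace ↥(Metric.sphere (0 : E2) 1) :=
      isConnected_iff_connectedSpace.mp (isConnected_sphere rank2 0 zero_le_one)
    have himg : g '' Set.univ = J := by
      ext w
      constructor
      · rintro ⟨y, -, rfl⟩; exact (h.symm y).2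
      · intro hw; exact ⟨h ⟨w, hw⟩, trivial, by simp [hg]⟩
    rw [← himg]
    exact isPreconnected_univ.image g hgc.continuousOn

end DendriteAux

open DendriteAux Set Metric ENNReal

/-- Dendrite criterion: if a system of injective contractions of ℝⁿ
has the single-point intersection property and its bipartite intersection graph is
a tree, then the attractor is a dendrite. -/
theorem dendrite_criterion {n m : ℕ}
    (S : Fin m → EuclideanSpace ℝ (Fin n) → EuclideanSpace ℝ (Fin n))
    (r : Fin m → NNReal) (hr : ∀ i, r i < 1)
    (hLip : ∀ i, LipschitzWith (r i) (S i))
    (hInj : ∀ i, Function.Injective (S i))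
    (K : Set (EuclideanSpace ℝ (Fin n)))
    (hKne : K.Nonempty) (hKcomp : IsCompact K)
    (hK : K = ⋃ i, (S i) '' K)
    (hSIP : ∀ i j, i ≠ j → ((S i '' K) ∩ (S j '' K)).Subsingleton)
    (C : Set (EuclideanSpace ℝ (Fin n)))
    (hC : C = {x | ∃ i j, i ≠ j ∧ x ∈ (S i '' K) ∩ (S j '' K)})
    (G : SimpleGraph (Fin m ⊕ ↥C))
    (hG : ∀ u v, G.Adj u v ↔
      (∃ (i : Fin m) (A : ↥C), u = Sum.inl i ∧ v = Sum.inr A ∧ (A : EuclideanSpace ℝ (Fin n)) ∈ S i '' K) ∨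
      (∃ (i : Fin m) (A : ↥C), u = Sum.inr A ∧ v = Sum.inl i ∧ (A : EuclideanSpace ℝ (Fin n)) ∈ S i '' K))
    (hTree : G.IsTree) :
    IsCompact K ∧ IsConnected K ∧ LocallyConnectedSpace ↥K ∧
      ¬ ∃ A ⊆ K, Nonempty (↥A ≃ₜ ↥(Metric.sphere (0 : EuclideanSpace ℝ (Fin 2)) 1)) := by
  classical
  set c : NNReal := (Finset.univ.sup r) ⊔ (1/2 : NNReal) with hc
  have hciN : ∀ i, r i ≤ c := fun i =>
    le_trans (Finset.le_sup (Finset.mem_univ i)) le_sup_left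
  have hci : ∀ i, (r i : ℝ) ≤ (c : ℝ) := fun i => by exact_mod_cast hciN i
  have hc1N : c < 1 := by
    apply sup_lt_iff.mpr
    constructor
    · exact (Finset.sup_lt_iff (by norm_num : (⊥ : NNReal) < 1)).mpr (fun i _ => hr i)
    · rw [← NNReal.coe_lt_coe]
      norm_num
  have hc1 : (c:ℝ) < 1 := by exact_mod_cast hc1N
  have hpr := piece_reach S K C G hG hTree.isConnected
  have hchains := chains_exist S r hLip K hKcomp hK c hc1 hci hpr
  have hpre : IsPreconnected K := chains_preconnected hKcomp hchains
  refine ⟨hKcomp, ⟨hKne, hpre⟩, loc_conn S r hLip K hKcomp hK hpre c hc1 hci, ?_⟩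
  rintro ⟨J, hJK, ⟨h⟩⟩
  obtain ⟨hJinf, hJcomp, hJpc⟩ := circle_facts J h
  have hiter : ∀ k : ℕ, ∃ J' : Set (EuclideanSpace ℝ (Fin n)), J' ⊆ K ∧
      Nonempty (↥J' ≃ₜ ↥(Metric.sphere (0 : EuclideanSpace ℝ (Fin 2)) 1)) ∧
      EMetric.diam J ≤ (c : ℝ≥0∞)^k * EMetric.diam J' := by
    intro k
    induction k with
    | zero => exact ⟨J, hJK, ⟨h⟩, by simp⟩
    | succ k ih =>
      obtain ⟨J', hJ'K, ⟨h'⟩, hd⟩ := ih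
      obtain ⟨hJ'inf, hJ'comp, hJ'pc⟩ := circle_facts J' h'
      obtain ⟨i, hJ'i⟩ := circle_in_piece S r hLip K hKcomp hK hSIP C hC G hG hTree
        J' hJ'K hJ'inf hJ'pc
      set J'' : Set (EuclideanSpace ℝ (Fin n)) := S i ⁻¹' J' ∩ K with hJ''
      have hJ''K : J'' ⊆ K := Set.inter_subset_right
      have hJ''comp : IsCompact J'' :=
        hKcomp.of_isClosed_subset
          ((hJ'comp.isClosed.preimage (hLip i).continuous).inter hKcomp.isClosed)
          Set.inter_subset_right
      have himg : S i '' J'' = J' := by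
        apply Set.Subset.antisymm
        · rintro _ ⟨a, ⟨ha1, _⟩, rfl⟩
          exact ha1
        · intro y hy
          obtain ⟨a, haK, rfl⟩ := hJ'i hy
          exact ⟨a, ⟨hy, haK⟩, rfl⟩
      have hbij : Function.Bijective (fun a : ↥J'' => (⟨S i a.1, a.2.1⟩ : ↥J')) := by
        constructor
        · intro a b hab
          exact Subtype.ext (hInj i (congrArg Subtype.val hab))
        · rintro ⟨y, hy⟩
          rw [← himg] at hy
          obtain ⟨a, haJ'', ha⟩ := hy
          exact ⟨⟨a, haJ''⟩, Subtype.ext ha⟩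
      haveI : CompactSpace ↥J'' := isCompact_iff_compactSpace.mp hJ''comp
      have hcont : Continuous (fun a : ↥J'' => (⟨S i a.1, a.2.1⟩ : ↥J')) :=
        Continuous.subtype_mk ((hLip i).continuous.comp continuous_subtype_val) _
      have hcont' : Continuous (Equiv.ofBijective _ hbij) := hcont
      let homeo : ↥J'' ≃ₜ ↥J' := Continuous.homeoOfEquivCompactToT2 hcont'
      have hd' : EMetric.diam J' ≤ (c : ℝ≥0∞) * EMetric.diam J'' := by
        calc EMetric.diam J' = EMetric.diam (S i '' J'') := by rw [himg]
          _ ≤ (r i : ℝ≥0∞) * EMetric.diam J'' := (hLip i).ediam_image_le J''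
          _ ≤ (c : ℝ≥0∞) * EMetric.diam J'' := by
              apply mul_le_mul_left
              exact_mod_cast hciN i
      refine ⟨J'', hJ''K, ⟨homeo.trans h'⟩, ?_⟩
      calc EMetric.diam J ≤ (c : ℝ≥0∞)^k * EMetric.diam J' := hd
        _ ≤ (c : ℝ≥0∞)^k * ((c : ℝ≥0∞) * EMetric.diam J'') := mul_le_mul_right hd' _
        _ = (c : ℝ≥0∞)^(k+1) * EMetric.diam J'' := by ring
  have hbound : ∀ k : ℕ, EMetric.diam J ≤ (c : ℝ≥0∞)^k * EMetric.diam K := by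
    intro k
    obtain ⟨J', hJ'K, _, hd⟩ := hiter k
    exact hd.trans (mul_le_mul_right (EMetric.diam_mono hJ'K) _)
  have htend : Filter.Tendsto (fun k : ℕ => (c : ℝ≥0∞)^k * EMetric.diam K)
      Filter.atTop (nhds 0) := by
    have h0 : Filter.Tendsto (fun k : ℕ => (c : ℝ≥0∞)^k) Filter.atTop (nhds 0) :=
      ENNReal.tendsto_pow_atTop_nhds_zero_of_lt_one (by exact_mod_cast hc1N)
    have := ENNReal.Tendsto.mul_const h0 (Or.inr hKcomp.isBounded.ediam_ne_top)
    rwa [zero_mul] at this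
  have hdz : EMetric.diam J ≤ 0 := ge_of_tendsto' htend hbound
  have hsub : J.Subsingleton := EMetric.diam_eq_zero_iff.mp (le_antisymm hdz zero_le)
  exact hJinf hsub.finite
end
end

section
/- Let S_1,…,S_m be contractive affine maps of ℝ² and let P ⊂ ℝ² be a compact set with nonempty interior. For a finite multiindex 𝐢 = i_1…i_n let S_𝐢 = S_{i_1}∘⋯∘S_{i_n}, and define Q_𝐢 = max{ ‖S_𝐢(x) − S_𝐢(y)‖ / ‖x − y‖ : x, y ∈ P, x ≠ y } and q_𝐢 = min{ ‖S_𝐢(x) − S_𝐢(y)‖ / ‖x − y‖ : x, y ∈ P, x ≠ y }. Set λ = min_{i ∈ {1,…,m}} (log Q_i / log q_i). Then for every finite multiindex 𝐢, one has Q_𝐢 ≤ q_𝐢^λ. -/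
/-- Composition `S i₁ ∘ S i₂ ∘ ⋯ ∘ S iₙ` along a multiindex given as a list. -/
def compList {m : ℕ} {E : Type*} (S : Fin m → E → E) : List (Fin m) → E → E
  | [] => id
  | i :: l => S i ∘ compList S l

/-- The set of distortion ratios `‖F x - F y‖ / ‖x - y‖` over distinct points of `P`. -/
def ratioSet (F : EuclideanSpace ℝ (Fin 2) → EuclideanSpace ℝ (Fin 2))
    (P : Set (EuclideanSpace ℝ (Fin 2))) : Set ℝ :=
  {t | ∃ x ∈ P, ∃ y ∈ P, x ≠ y ∧ t = ‖F x - F y‖ / ‖x - y‖}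

private abbrev E2 := EuclideanSpace ℝ (Fin 2)

/-- Key geometric lemma: since `P` has nonempty interior, every distortion ratio of an
affine map (which depends only on the direction) is realized over `P`. -/
lemma ratio_mem_ratioSet (P : Set E2) (hPint : (interior P).Nonempty)
    (F : E2 →ᵃ[ℝ] E2) {u v : E2} (huv : u ≠ v) :
    ‖F u - F v‖ / ‖u - v‖ ∈ ratioSet ⇑F P := by
  obtain ⟨z, hz⟩ := hPint
  obtain ⟨ε, hε, hball⟩ := Metric.isOpen_iff.mp isOpen_interior z hz
  have hw : u - v ≠ 0 := sub_ne_zero.mpr huv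
  have hwn : (0:ℝ) < ‖u - v‖ := norm_pos_iff.mpr hw
  set c : ℝ := ε / (2 * ‖u - v‖) with hc
  have hcpos : 0 < c := by positivity
  set x : E2 := z + c • (u - v) with hx
  have hxz : x - z = c • (u - v) := by simp [hx]
  have hxznorm : ‖x - z‖ = c * ‖u - v‖ := by
    rw [hxz, norm_smul, Real.norm_eq_abs, abs_of_pos hcpos]
  have hxne : x ≠ z := by
    intro h
    have : x - z = 0 := by rw [h]; simp
    rw [hxz] at this
    exact hw (by simpa [smul_eq_zero, hcpos.ne'] using this)
  have hxP : x ∈ P := by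
    apply interior_subset
    apply hball
    have : c * ‖u - v‖ = ε / 2 := by
      rw [hc]; field_simp
    simp [Metric.mem_ball, dist_eq_norm, hxznorm, this, hε]
  refine ⟨x, hxP, z, interior_subset hz, hxne, ?_⟩
  have h1 : F x - F z = c • (F u - F v) := by
    have := F.linearMap_vsub x z
    simp only [vsub_eq_sub] at this
    rw [← this, hxz, map_smul]
    congr 1
    have := F.linearMap_vsub u v
    simp only [vsub_eq_sub] at this
    rw [this]
  rw [h1, norm_smul, Real.norm_eq_abs, abs_of_pos hcpos, hxznorm,
    mul_div_mul_left _ _ hcpos.ne']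

lemma compList_inj {m : ℕ} {S : Fin m → E2 → E2} (hS : ∀ i, Function.Injective (S i)) :
    ∀ l : List (Fin m), Function.Injective (compList S l)
  | [] => fun a b h => h
  | i :: l => (hS i).comp (compList_inj hS l)

/-- with `Q_𝐢`, `q_𝐢` the maximal and minimal distortions of `S_𝐢` over `P`
and `λ = min_i (log Q_i / log q_i)`, one has `Q_𝐢 ≤ q_𝐢 ^ λ` for every multiindex `𝐢`. -/
theorem max_distortion_le_min_distortion_rpow {m : ℕ}
    (P : Set (EuclideanSpace ℝ (Fin 2)))
    (hPcomp : IsCompact P) (hPint : (interior P).Nonempty)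
    (S : Fin m → (EuclideanSpace ℝ (Fin 2)) →ᵃ[ℝ] (EuclideanSpace ℝ (Fin 2)))
    (r : Fin m → NNReal) (hr : ∀ i, r i < 1)
    (hLip : ∀ i, LipschitzWith (r i) (S i))
    (hInj : ∀ i, Function.Injective (S i).linear)
    (Q q : List (Fin m) → ℝ)
    (hQ : ∀ l : List (Fin m), IsGreatest (ratioSet (compList (fun i => ⇑(S i)) l) P) (Q l))
    (hq : ∀ l : List (Fin m), IsLeast (ratioSet (compList (fun i => ⇑(S i)) l) P) (q l))
    (lam : ℝ)
    (hlam : IsLeast {t | ∃ i : Fin m, t = Real.log (Q [i]) / Real.log (q [i])} lam) :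
    ∀ l : List (Fin m), l ≠ [] → Q l ≤ (q l) ^ lam := by
  have hSinj : ∀ i, Function.Injective ⇑(S i) := fun i => (S i).linear_injective_iff.mp (hInj i)
  have hGinj := compList_inj (S := fun i => ⇑(S i)) hSinj
  -- every q l is positive
  have hqpos : ∀ l, 0 < q l := by
    intro l
    obtain ⟨x, hx, y, hy, hne, hval⟩ := (hq l).1
    rw [hval]
    have h1 : compList (fun i => ⇑(S i)) l x ≠ compList (fun i => ⇑(S i)) l y :=
      fun h => hne (hGinj l h)
    have h2 : (0:ℝ) < ‖compList (fun i => ⇑(S i)) l x - compList (fun i => ⇑(S i)) l y‖ :=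
      norm_pos_iff.mpr (sub_ne_zero.mpr h1)
    exact div_pos h2 (norm_pos_iff.mpr (sub_ne_zero.mpr hne))
  have hqleQ : ∀ l, q l ≤ Q l := fun l => (hq l).2 (hQ l).1
  have hQpos : ∀ l, 0 < Q l := fun l => lt_of_lt_of_le (hqpos l) (hqleQ l)
  -- Q [i] < 1
  have hQlt1 : ∀ i, Q [i] < 1 := by
    intro i
    obtain ⟨x, hx, y, hy, hne, hval⟩ := (hQ [i]).1
    have hxy : (0:ℝ) < ‖x - y‖ := norm_pos_iff.mpr (sub_ne_zero.mpr hne)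
    have hlip := (hLip i).dist_le_mul x y
    simp only [dist_eq_norm] at hlip
    have hci : compList (fun i => ⇑(S i)) [i] x - compList (fun i => ⇑(S i)) [i] y
        = S i x - S i y := rfl
    rw [hval, hci]
    calc ‖S i x - S i y‖ / ‖x - y‖ ≤ (r i : ℝ) := by
          rw [div_le_iff₀ hxy]; exact hlip
      _ < 1 := by exact_mod_cast hr i
  have hqlt1 : ∀ i : Fin m, q [i] < 1 := fun i => lt_of_le_of_lt (hqleQ [i]) (hQlt1 i)
  have hlogq : ∀ i : Fin m, Real.log (q [i]) < 0 :=
    fun i => Real.log_neg (hqpos [i]) (hqlt1 i)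
  -- lam is nonnegative
  have hlamnn : 0 ≤ lam := by
    obtain ⟨i, hi⟩ := hlam.1
    rw [hi]
    have h1 : Real.log (Q [i]) ≤ 0 := Real.log_nonpos (hQpos [i]).le (hQlt1 i).le
    exact div_nonneg_of_nonpos h1 (hlogq i).le
  -- single-index case
  have hbase : ∀ i : Fin m, Q [i] ≤ q [i] ^ lam := by
    intro i
    have h1 : lam ≤ Real.log (Q [i]) / Real.log (q [i]) := hlam.2 ⟨i, rfl⟩
    have h2 : Real.log (Q [i]) ≤ lam * Real.log (q [i]) :=
      (le_div_iff_of_neg (hlogq i)).mp h1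
    calc Q [i] = Real.exp (Real.log (Q [i])) := (Real.exp_log (hQpos [i])).symm
      _ ≤ Real.exp (Real.log (q [i]) * lam) := Real.exp_le_exp.mpr (by linarith)
      _ = q [i] ^ lam := (Real.rpow_def_of_pos (hqpos [i]) lam).symm
  -- factorization of a ratio of a composition
  have hfact : ∀ (i : Fin m) (l : List (Fin m)) (t : ℝ),
      t ∈ ratioSet (compList (fun i => ⇑(S i)) (i :: l)) P →
      ∃ a ∈ ratioSet (compList (fun i => ⇑(S i)) [i]) P,
        ∃ b ∈ ratioSet (compList (fun i => ⇑(S i)) l) P, t = a * b := by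
    intro i l t ht
    obtain ⟨x, hx, y, hy, hne, hval⟩ := ht
    set G := compList (fun i => ⇑(S i)) l with hG
    have hGne : G x ≠ G y := fun h => hne (hGinj l h)
    have hGnorm : (0:ℝ) < ‖G x - G y‖ := norm_pos_iff.mpr (sub_ne_zero.mpr hGne)
    have hxy : (0:ℝ) < ‖x - y‖ := norm_pos_iff.mpr (sub_ne_zero.mpr hne)
    refine ⟨‖S i (G x) - S i (G y)‖ / ‖G x - G y‖, ?_, ‖G x - G y‖ / ‖x - y‖,
      ⟨x, hx, y, hy, hne, rfl⟩, ?_⟩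
    · have := ratio_mem_ratioSet P hPint (S i) hGne
      have hc1 : compList (fun i => ⇑(S i)) [i] = ⇑(S i) := rfl
      rw [hc1]
      exact this
    · rw [hval]
      have hc2 : compList (fun i => ⇑(S i)) (i :: l) x - compList (fun i => ⇑(S i)) (i :: l) y
          = S i (G x) - S i (G y) := rfl
      rw [hc2]
      field_simp
  -- main induction
  intro l hl
  induction l with
  | nil => exact absurd rfl hl
  | cons i l ih =>
    rcases eq_or_ne l [] with h | h
    · subst h; exact hbase i
    · have hQl := ih h
      -- Q (i::l) ≤ Q [i] * Q l
      obtain ⟨a, ha, b, hb, hab⟩ := hfact i l (Q (i :: l)) (hQ (i :: l)).1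
      have haQ : a ≤ Q [i] := (hQ [i]).2 ha
      have hbQ : b ≤ Q l := (hQ l).2 hb
      have hanneg : 0 ≤ a := le_trans (hqpos [i]).le ((hq [i]).2 ha)
      have hbnneg : 0 ≤ b := le_trans (hqpos l).le ((hq l).2 hb)
      have hQmul : Q (i :: l) ≤ Q [i] * Q l := by
        rw [hab]; exact mul_le_mul haQ hbQ hbnneg (hQpos [i]).le
      -- q [i] * q l ≤ q (i::l)
      obtain ⟨a', ha', b', hb', hab'⟩ := hfact i l (q (i :: l)) (hq (i :: l)).1
      have hqmul : q [i] * q l ≤ q (i :: l) := by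
        rw [hab']
        exact mul_le_mul ((hq [i]).2 ha') ((hq l).2 hb') (hqpos l).le
          (le_trans (hqpos [i]).le ((hq [i]).2 ha'))
      calc Q (i :: l) ≤ Q [i] * Q l := hQmul
        _ ≤ q [i] ^ lam * q l ^ lam :=
            mul_le_mul (hbase i) hQl (hQpos l).le (Real.rpow_nonneg (hqpos [i]).le lam)
        _ = (q [i] * q l) ^ lam := (Real.mul_rpow (hqpos [i]).le (hqpos l).le).symm
        _ ≤ q (i :: l) ^ lam :=
            Real.rpow_le_rpow (mul_pos (hqpos [i]) (hqpos l)).le hqmul hlamnn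
end
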